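/- For every n ≥ 1, the union of the geometric realizations of the source and target (n-1)-faces equals the topological boundary of the cube: ⋃_{x ∈ ψ (n-1) n ∪ ω (n-1) n} geom x = frontier (Set.univ.pi (fun _ : Fin n => Set.Icc (-1 : ℝ) 1)) in the space Fin n → ℝ. -/

import Mathlib

/-- The geometric realization of a sub-cube word `x : Fin n → SignType`
as a face of the cube `[-1,1]^n ⊆ (Fin n → ℝ)`. -/
def geom {n : ℕ} (x : Fin n → SignType) : Set (Fin n → ℝ) :=
  {p | ∀ i, (x i = 0 → p i ∈ Set.Icc (-1 : ℝ) 1) ∧ (x i ≠ 0 → p i = (x i : ℝ))}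

/-- The dimension of a sub-cube: the number of `0` letters. -/
def dim {n : ℕ} (x : Fin n → SignType) : ℕ :=
  (Finset.univ.filter fun i => x i = 0).card

/-- The zero-set of a word. -/
def zeroSet {n : ℕ} (x : Fin n → SignType) : Finset (Fin n) :=
  Finset.univ.filter fun i => x i = 0

/-- Append the letter `s` at the end of a word (`λ`, `μ`, `ν` are `app (-1)`, `app 0`, `app 1`). -/
def app {n : ℕ} (s : SignType) (x : Fin n → SignType) : Fin (n + 1) → SignType :=
  Fin.snoc x s

/-- The source `k`-faces `ψ k n` of the `n`-cube. -/
def Psi : (k n : ℕ) → Finset (Fin n → SignType)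
  | _, 0 => {fun i => i.elim0}
  | 0, _ + 1 => {fun _ => -1}
  | k + 1, n + 1 =>
    if n + 1 ≤ k + 1 then {fun _ => 0}
    else if Even (k + 1) then
      (Psi k n).image (app 0) ∪ (Psi (k + 1) n).image (app (-1))
    else
      (Psi k n).image (app 0) ∪ (Psi (k + 1) n).image (app 1)

/-- The target `k`-faces `ω k n` of the `n`-cube. -/
def Omega : (k n : ℕ) → Finset (Fin n → SignType)
  | _, 0 => {fun i => i.elim0}
  | 0, _ + 1 => {fun _ => 1}
  | k + 1, n + 1 =>
    if n + 1 ≤ k + 1 then {fun _ => 0}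
    else if Even (k + 1) then
      (Omega (k + 1) n).image (app 1) ∪ (Omega k n).image (app 0)
    else
      (Omega (k + 1) n).image (app (-1)) ∪ (Omega k n).image (app 0)
/-- Exactly one nonzero letter. -/
def OneNZ {n : ℕ} (x : Fin n → SignType) : Prop :=
  ∃ i, x i ≠ 0 ∧ ∀ j, j ≠ i → x j = 0

lemma one_app_zero {n : ℕ} (x : Fin n → SignType) : OneNZ (app 0 x) ↔ OneNZ x := by
  constructor
  · rintro ⟨i, hi, hj⟩
    have hil : i ≠ Fin.last n := by
      rintro rfl; exact hi (by simp [app])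
    obtain ⟨i', rfl⟩ := Fin.exists_castSucc_eq.mpr hil
    refine ⟨i', ?_, fun j hj' => ?_⟩
    · simpa [app] using hi
    · have := hj j.castSucc (by simpa using hj')
      simpa [app] using this
  · rintro ⟨i, hi, hj⟩
    refine ⟨i.castSucc, by simpa [app] using hi, fun j hj' => ?_⟩
    rcases Fin.eq_castSucc_or_eq_last j with ⟨j', rfl⟩ | rfl
    · have : j' ≠ i := by
        rintro rfl
        exact hj' rfl
      simpa [app] using hj j' this
    · simp [app]

lemma one_app_ne {n : ℕ} {s : SignType} (hs : s ≠ 0) (x : Fin n → SignType) :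
    OneNZ (app s x) ↔ x = fun _ => 0 := by
  constructor
  · rintro ⟨i, hi, hj⟩
    have hil : i = Fin.last n := by
      by_contra h
      obtain ⟨i', rfl⟩ := Fin.exists_castSucc_eq.mpr h
      exact hs (by simpa [app] using hj (Fin.last n) (by simp [Fin.ext_iff, i'.isLt.ne']))
    subst hil
    funext j
    simpa [app] using hj j.castSucc (by simp [Fin.ext_iff, j.isLt.ne])
  · rintro rfl
    refine ⟨Fin.last n, by simpa [app] using hs, fun j hj => ?_⟩
    rcases Fin.eq_castSucc_or_eq_last j with ⟨j', rfl⟩ | rfl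
    · simp [app]
    · exact absurd rfl hj

lemma mem_char : ∀ n, 1 ≤ n → ∀ x : Fin n → SignType,
    x ∈ Psi (n - 1) n ∪ Omega (n - 1) n ↔ OneNZ x := by
  intro n
  induction n with
  | zero => omega
  | succ m IH =>
    intro _ x
    match m, IH with
    | 0, _ =>
      simp only [Nat.add_sub_cancel, Psi, Omega, Finset.mem_union, Finset.mem_singleton]
      constructor
      · rintro (rfl | rfl)
        · exact ⟨0, by simp, fun j hj => absurd (Fin.fin_one_eq_zero j) hj⟩
        · exact ⟨0, by simp, fun j hj => absurd (Fin.fin_one_eq_zero j) hj⟩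
      · rintro ⟨i, hi, -⟩
        have h0 : i = 0 := Fin.fin_one_eq_zero i
        subst h0
        rcases hx : x 0 with _ | _ | _
        · exact absurd hx hi
        · left; funext j; rw [Fin.fin_one_eq_zero j, hx]; rfl
        · right; funext j; rw [Fin.fin_one_eq_zero j, hx]; rfl
    | k + 1, IH =>
      have IH' := IH (by omega)
      have hP : Psi (k + 1) (k + 2) =
          if Even (k + 1) then
            (Psi k (k+1)).image (app 0) ∪ {app (-1) (fun _ => 0)}
          else (Psi k (k+1)).image (app 0) ∪ {app 1 (fun _ => 0)} := by
        conv_lhs => unfold Psi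
        rw [if_neg (by omega)]
        unfold Psi
        simp
      have hO : Omega (k + 1) (k + 2) =
          if Even (k + 1) then
            ({app 1 (fun _ => 0)} : Finset _) ∪ (Omega k (k+1)).image (app 0)
          else ({app (-1) (fun _ => 0)} : Finset _) ∪ (Omega k (k+1)).image (app 0) := by
        conv_lhs => unfold Omega
        rw [if_neg (by omega)]
        unfold Omega
        simp
      have key : x ∈ Psi (k + 1) (k + 2) ∪ Omega (k + 1) (k + 2) ↔
          (∃ y, (y ∈ Psi k (k+1) ∨ y ∈ Omega k (k+1)) ∧ app 0 y = x) ∨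
            x = app (-1) (fun _ => 0) ∨ x = app 1 (fun _ => 0) := by
        rw [Finset.mem_union, hP, hO]
        by_cases h : Even (k + 1)
        · simp only [h, if_true, Finset.mem_union, Finset.mem_image, Finset.mem_singleton]
          constructor
          · rintro ((⟨a, ha, rfl⟩ | rfl) | (rfl | ⟨a, ha, rfl⟩))
            exacts [Or.inl ⟨a, Or.inl ha, rfl⟩, Or.inr (Or.inl rfl), Or.inr (Or.inr rfl),
              Or.inl ⟨a, Or.inr ha, rfl⟩]
          · rintro (⟨y, hy | hy, rfl⟩ | rfl | rfl)
            exacts [Or.inl (Or.inl ⟨y, hy, rfl⟩), Or.inr (Or.inr ⟨y, hy, rfl⟩),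
              Or.inl (Or.inr rfl), Or.inr (Or.inl rfl)]
        · simp only [h, if_false, Finset.mem_union, Finset.mem_image, Finset.mem_singleton]
          constructor
          · rintro ((⟨a, ha, rfl⟩ | rfl) | (rfl | ⟨a, ha, rfl⟩))
            exacts [Or.inl ⟨a, Or.inl ha, rfl⟩, Or.inr (Or.inr rfl), Or.inr (Or.inl rfl),
              Or.inl ⟨a, Or.inr ha, rfl⟩]
          · rintro (⟨y, hy | hy, rfl⟩ | rfl | rfl)
            exacts [Or.inl (Or.inl ⟨y, hy, rfl⟩), Or.inr (Or.inr ⟨y, hy, rfl⟩),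
              Or.inr (Or.inl rfl), Or.inl (Or.inr rfl)]
      rw [show k + 1 + 1 - 1 = k + 1 from rfl, key]
      have hd : x = app (x (Fin.last (k+1))) (fun i => x i.castSucc) := by
        funext j
        rcases Fin.eq_castSucc_or_eq_last j with ⟨j', rfl⟩ | rfl <;> simp [app]
      obtain ⟨s, y, hxd⟩ : ∃ s y, x = app s y := ⟨_, _, hd⟩
      subst hxd
      constructor
      · rintro (⟨z, hz, hzx⟩ | hx | hx) <;> [rw [← hzx]; rw [hx]; rw [hx]]
        · exact (one_app_zero z).mpr ((IH' z).mp (Finset.mem_union.mpr hz))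
        · exact (one_app_ne (by decide) _).mpr rfl
        · exact (one_app_ne (by decide) _).mpr rfl
      · intro hx
        rcases s with _ | _ | _
        · left
          refine ⟨y, ?_, rfl⟩
          exact Finset.mem_union.mp ((IH' y).mpr ((one_app_zero y).mp hx))
        · right; left
          rw [(one_app_ne (s := SignType.neg) (by decide) y).mp hx]; rfl
        · right; right
          rw [(one_app_ne (s := SignType.pos) (by decide) y).mp hx]; rfl

theorem stmt_8 (n : ℕ) (hn : 1 ≤ n) :
    (⋃ x ∈ Psi (n - 1) n ∪ Omega (n - 1) n, geom x) =
      frontier (Set.univ.pi fun _ : Fin n => Set.Icc (-1 : ℝ) 1) := by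
  have hcl : IsClosed (Set.univ.pi fun _ : Fin n => Set.Icc (-1:ℝ) 1) :=
    isClosed_set_pi fun i _ => isClosed_Icc
  have hfr : frontier (Set.univ.pi fun _ : Fin n => Set.Icc (-1 : ℝ) 1) =
      {p | (∀ i, p i ∈ Set.Icc (-1:ℝ) 1) ∧ ¬ ∀ i, p i ∈ Set.Ioo (-1:ℝ) 1} := by
    rw [frontier, hcl.closure_eq, interior_pi_set Set.finite_univ]
    ext p
    simp only [Set.mem_diff, Set.mem_pi, Set.mem_univ, true_implies, Set.mem_setOf_eq,
      interior_Icc]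
  rw [hfr]
  ext p
  simp only [Set.mem_iUnion, Set.mem_setOf_eq, exists_prop]
  constructor
  · rintro ⟨x, hx, hp⟩
    obtain ⟨i, hi, hz⟩ := (mem_char n hn x).mp hx
    have hpi : p i = (x i : ℝ) := (hp i).2 hi
    constructor
    · intro j
      by_cases hji : j = i
      · subst hji
        rw [hpi]
        rcases hv : x j with _ | _ | _ <;> simp
      · exact (hp j).1 (hz j hji)
    · intro hall
      have h2 := hall i
      rw [hpi] at h2
      rcases hv : x i with _ | _ | _
      · exact hi hv
      · rw [hv] at h2; simp at h2
      · rw [hv] at h2; simp at h2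
  · rintro ⟨hIcc, hIoo⟩
    push_neg at hIoo
    obtain ⟨i, hi⟩ := hIoo
    have hIcci := hIcc i
    have hval : p i = -1 ∨ p i = 1 := by
      simp only [Set.mem_Icc] at hIcci
      simp only [Set.mem_Ioo, not_and_or, not_lt] at hi
      rcases hi with h | h
      · left; linarith
      · right; linarith
    refine ⟨fun j => if j = i then (if p i = 1 then 1 else -1) else 0, ?_, ?_⟩
    · refine (mem_char n hn _).mpr ⟨i, ?_, fun j hj => by simp [hj]⟩
      show (if i = i then (if p i = 1 then 1 else -1) else (0 : SignType)) ≠ 0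
      rw [if_pos rfl]
      by_cases h1 : p i = 1
      · rw [if_pos h1]; decide
      · rw [if_neg h1]; decide
    · intro j
      constructor
      · intro _
        exact hIcc j
      · intro hj0
        by_cases hji : j = i
        · subst hji
          show p j = ((if j = j then (if p j = 1 then 1 else -1) else (0 : SignType) : SignType) : ℝ)
          rw [if_pos rfl]
          rcases hval with h | h
          · rw [if_neg (show ¬ p j = 1 by rw [h]; norm_num), h]; simp
          · rw [if_pos h, h]; simp
        · simp [hji] at hj0
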